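/- arXiv:cs/0507048 — 8 statements merged into one kernel-verified Lean document; each statement's English description precedes it below -/
import Mathlib

section
/- A CNF formula Π is CIRC-redundant if and only if it contains a CIRC-redundant clause. That is, circumscription has the local redundancy property: Π is equivalent under circumscription to some proper subset of itself if and only if there exists a clause γ ∈ Π with CIRC(Π \ {γ}) = CIRC(Π). -/
/-- A propositional clause: sets of positively and negatively occurring variables. -/
structure Clause (V : Type) where
  pos : Set V
  neg : Set V

/-- A model (set of variables assigned true) satisfies a clause. -/
def Clause.sat {V : Type} (M : Set V) (c : Clause V) : Prop :=
  (∃ x ∈ c.pos, x ∈ M) ∨ (∃ x ∈ c.neg, x ∉ M)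

/-- Models of a CNF formula (set of clauses). -/
def ModOf {V : Type} (F : Set (Clause V)) : Set (Set V) :=
  {M | ∀ c ∈ F, c.sat M}

/-- Minimal models of a formula, w.r.t. set inclusion. -/
def CIRC {V : Type} (F : Set (Clause V)) : Set (Set V) :=
  {M | M ∈ ModOf F ∧ ¬ ∃ M' ∈ ModOf F, M' ⊂ M}

lemma modOf_anti {V : Type} {F G : Set (Clause V)} (h : F ⊆ G) : ModOf G ⊆ ModOf F :=
  fun _ hM c hc => hM c (h hc)

lemma exists_min_below {V : Type} [Fintype V] (A : Set (Set V)) {M : Set V} (hM : M ∈ A) :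
    ∃ N ∈ A, N ⊆ M ∧ ¬ ∃ N' ∈ A, N' ⊂ N := by
  have hwf : WellFounded ((· < ·) : Set V → Set V → Prop) := IsWellFounded.wf
  obtain ⟨N, ⟨hNA, hNM⟩, hmin⟩ := hwf.has_min {N | N ∈ A ∧ N ⊆ M} ⟨M, hM, subset_rfl⟩
  exact ⟨N, hNA, hNM, fun ⟨N', hN'A, hN'⟩ => hmin N' ⟨hN'A, hN'.subset.trans hNM⟩ hN'⟩

lemma circ_sandwich {V : Type} [Fintype V] {F' G F : Set (Clause V)}
    (h1 : F' ⊆ G) (h2 : G ⊆ F) (heq : CIRC F' = CIRC F) : CIRC G = CIRC F := by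
  have mFG : ModOf F ⊆ ModOf G := modOf_anti h2
  have mGF' : ModOf G ⊆ ModOf F' := modOf_anti h1
  ext M
  constructor
  · rintro ⟨hMG, hMmin⟩
    obtain ⟨N, hNF', hNM, hNmin⟩ := exists_min_below (ModOf F') (mGF' hMG)
    have hN : N ∈ CIRC F := heq ▸ ⟨hNF', hNmin⟩
    have hNG : N ∈ ModOf G := mFG hN.1
    have hNeq : N = M := by
      by_contra hne
      exact hMmin ⟨N, hNG, ⟨hNM, fun h => hne (le_antisymm hNM h)⟩⟩
    exact hNeq ▸ hN
  · rintro hM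
    have hM' : M ∈ CIRC F' := heq ▸ hM
    refine ⟨mFG hM.1, fun ⟨N, hNG, hNM⟩ => hM'.2 ⟨N, mGF' hNG, hNM⟩⟩

/-- Circumscription has the local redundancy property. -/
theorem circ_local_redundancy {V : Type} [Fintype V]
    (F : Set (Clause V)) (hfin : F.Finite) :
    (∃ F' ⊂ F, CIRC F' = CIRC F) ↔ (∃ γ ∈ F, CIRC (F \ {γ}) = CIRC F) := by
  constructor
  · rintro ⟨F', hss, heq⟩
    obtain ⟨γ, hγF, hγF'⟩ := Set.exists_of_ssubset hss
    refine ⟨γ, hγF, circ_sandwich (G := F \ {γ}) ?_ Set.diff_subset heq⟩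
    intro c hc
    exact ⟨hss.subset hc, fun h => hγF' (h ▸ hc)⟩
  · rintro ⟨γ, hγ, heq⟩
    exact ⟨F \ {γ}, Set.sdiff_singleton_ssubset.mpr hγ, heq⟩
end

section
/- A clause γ ∈ Π is CIRC-redundant in Π if and only if for every model M of (Π \ {γ}) ∪ ¬γ there exists a model M' of Π with M' ⊊ M. -/
/-- The formula ¬γ: the set of unit clauses negating each literal of γ. -/
def negOf {V : Type} (γ : Clause V) : Set (Clause V) :=
  (fun x => (⟨∅, {x}⟩ : Clause V)) '' γ.pos ∪ (fun x => (⟨{x}, ∅⟩ : Clause V)) '' γ.neg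

lemma exists_min_model {V : Type} [Fintype V] (S : Set (Set V)) (M : Set V) (hM : M ∈ S) :
    ∃ N ∈ S, N ⊆ M ∧ ∀ N' ∈ S, ¬ N' ⊂ N := by
  obtain ⟨N, hN, hmin⟩ := Set.Finite.exists_minimalFor id {N ∈ S | N ⊆ M}
    (Set.toFinite _) ⟨M, hM, le_refl _⟩
  exact ⟨N, hN.1, hN.2, fun N' hN' hss =>
    not_subset_of_ssubset hss (hmin ⟨hN', hss.subset.trans hN.2⟩ hss.subset)⟩

lemma mem_negOf {V : Type} (γ : Clause V) (M : Set V) :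
    M ∈ ModOf (negOf γ) ↔ ¬ γ.sat M := by
  constructor
  · rintro h (⟨x, hx, hxM⟩ | ⟨x, hx, hxM⟩)
    · have := h ⟨∅, {x}⟩ (Or.inl ⟨x, hx, rfl⟩)
      rcases this with ⟨y, hy, _⟩ | ⟨y, hy, hyM⟩
      · exact hy
      · exact hyM (hy ▸ hxM)
    · have := h ⟨{x}, ∅⟩ (Or.inr ⟨x, hx, rfl⟩)
      rcases this with ⟨y, hy, hyM⟩ | ⟨y, hy, _⟩
      · exact hxM (hy ▸ hyM)
      · exact hy
  · rintro h c (⟨x, hx, rfl⟩ | ⟨x, hx, rfl⟩)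
    · exact Or.inr ⟨x, rfl, fun hxM => h (Or.inl ⟨x, hx, hxM⟩)⟩
    · exact Or.inl ⟨x, rfl, of_not_not fun hxM => h (Or.inr ⟨x, hx, hxM⟩)⟩

theorem circ_redundant_iff_contains_model {V : Type} [Fintype V]
    (F : Set (Clause V)) (hfin : F.Finite) (γ : Clause V) (hγ : γ ∈ F) :
    CIRC (F \ {γ}) = CIRC F ↔
      ∀ M ∈ ModOf ((F \ {γ}) ∪ negOf γ), ∃ M' ∈ ModOf F, M' ⊂ M := by
  have hsub : ∀ M, M ∈ ModOf F → M ∈ ModOf (F \ {γ}) := fun M h c hc => h c hc.1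
  have hmemF : ∀ M, M ∈ ModOf (F \ {γ}) → γ.sat M → M ∈ ModOf F := by
    intro M h hs c hc
    by_cases hcγ : c = γ
    · exact hcγ ▸ hs
    · exact h c ⟨hc, hcγ⟩
  have hsplit : ∀ M, M ∈ ModOf ((F \ {γ}) ∪ negOf γ) ↔
      M ∈ ModOf (F \ {γ}) ∧ ¬ γ.sat M := by
    intro M
    constructor
    · intro h
      exact ⟨fun c hc => h c (Or.inl hc), (mem_negOf γ M).1 fun c hc => h c (Or.inr hc)⟩
    · rintro ⟨h1, h2⟩ c (hc | hc)
      · exact h1 c hc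
      · exact (mem_negOf γ M).2 h2 c hc
  constructor
  · intro heq M hM
    rw [hsplit] at hM
    obtain ⟨N, hN, hNM, hNmin⟩ := exists_min_model (ModOf (F \ {γ})) M hM.1
    have hNc : N ∈ CIRC (F \ {γ}) := ⟨hN, fun ⟨N', hN', hss⟩ => hNmin N' hN' hss⟩
    rw [heq] at hNc
    refine ⟨N, hNc.1, hNM, fun hMN => ?_⟩
    exact hM.2 ((Set.Subset.antisymm hNM hMN ▸ hNc.1 : M ∈ ModOf F) γ hγ)
  · intro h
    have hdir : CIRC (F \ {γ}) ⊆ CIRC F := by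
      intro M hM
      have hMF : M ∈ ModOf F := by
        by_contra hMF
        have hMγ : ¬ γ.sat M := fun hs => hMF (hmemF M hM.1 hs)
        obtain ⟨M', hM', hss⟩ := h M ((hsplit M).2 ⟨hM.1, hMγ⟩)
        exact hM.2 ⟨M', hsub M' hM', hss⟩
      exact ⟨hMF, fun ⟨M', hM', hss⟩ => hM.2 ⟨M', hsub M' hM', hss⟩⟩
    apply Set.Subset.antisymm hdir
    intro M hM
    refine ⟨hsub M hM.1, ?_⟩
    rintro ⟨M', hM', hss⟩
    obtain ⟨N, hN, hNM', hNmin⟩ := exists_min_model (ModOf (F \ {γ})) M' hM'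
    have hNc : N ∈ CIRC (F \ {γ}) := ⟨hN, fun ⟨N', hN', hs⟩ => hNmin N' hN' hs⟩
    exact hM.2 ⟨N, (hdir hNc).1, lt_of_le_of_lt hNM' hss⟩
end

section
/- In classical propositional logic, a CNF formula is equivalent to one of its proper subsets if and only if it contains a clause γ with Π \ {γ} ⊨ γ (local redundancy property of classical logic). -/
/-- Classical propositional logic has the local redundancy property. -/
theorem classical_local_redundancy {V : Type}
    (F : Set (Clause V)) (hfin : F.Finite) :
    (∃ F' ⊂ F, ModOf F' = ModOf F) ↔ (∃ γ ∈ F, ∀ M ∈ ModOf (F \ {γ}), γ.sat M) := by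
  constructor
  · rintro ⟨F', hsub, hmod⟩
    obtain ⟨γ, hγF, hγF'⟩ := Set.exists_of_ssubset hsub
    refine ⟨γ, hγF, fun M hM => ?_⟩
    have hMF' : M ∈ ModOf F' := fun c hc => hM c ⟨hsub.1 hc, fun h => hγF' (h ▸ hc)⟩
    rw [hmod] at hMF'
    exact hMF' γ hγF
  · rintro ⟨γ, hγF, hent⟩
    refine ⟨F \ {γ}, by simp [Set.sdiff_singleton_ssubset, hγF], ?_⟩
    ext M
    constructor
    · intro hM c hc
      by_cases h : c = γ
      · exact h ▸ hent M hM
      · exact hM c ⟨hc, h⟩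
    · intro hM c hc
      exact hM c hc.1
end

section
/- For monotone entailment: if W' ⊆ W and every extension of the default theory ⟨D,W'⟩ entails W (i.e., W' ⊨_D W), then every selected process of ⟨D,W'⟩ is a selected process of ⟨D,W⟩; consequently Ext_D(W') ⊆ Ext_D(W) (faithful entailment). -/
/-- A default rule, represented semantically: precondition, justification and
consequence are given by their sets of models. -/
structure Default (V : Type) where
  prec : Set (Set V)
  just : Set (Set V)
  cons : Set (Set V)

/-- Models of the conjunction of the consequences of a sequence of defaults. -/
def consSet {V : Type} (p : List (Default V)) : Set (Set V) :=
  {M | ∀ d ∈ p, M ∈ d.cons}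

/-- Models of the conjunction of the justifications of a sequence of defaults. -/
def justSet {V : Type} (p : List (Default V)) : Set (Set V) :=
  {M | ∀ d ∈ p, M ∈ d.just}

/-- A process of ⟨D,W⟩: a duplicate-free sequence of defaults of D such that the
precondition of each default is entailed by W together with the consequences of
the preceding defaults. -/
def IsProcess {V : Type} (D : Set (Default V)) (W : Set (Clause V))
    (p : List (Default V)) : Prop :=
  p.Nodup ∧ (∀ d ∈ p, d ∈ D) ∧
  ∀ (i : ℕ) (h : i < p.length),
    ModOf W ∩ consSet (p.take i) ⊆ (p.get ⟨i, h⟩).prec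

/-- Success: W ∪ cons(p) is consistent with the justification of each default of p. -/
def Successful {V : Type} (W : Set (Clause V)) (p : List (Default V)) : Prop :=
  ∀ d ∈ p, (ModOf W ∩ consSet p ∩ d.just).Nonempty

/-- Local applicability of a default in a process. -/
def LocallyApplicable {V : Type} (W : Set (Clause V)) (p : List (Default V))
    (d : Default V) : Prop :=
  ModOf W ∩ consSet p ⊆ d.prec ∧ (ModOf W ∩ consSet p ∩ d.just).Nonempty

/-- Reiter semantics: selected processes. -/
def ReiterSelected {V : Type} (D : Set (Default V)) (W : Set (Clause V))
    (p : List (Default V)) : Prop :=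
  IsProcess D W p ∧ Successful W p ∧
  ∀ d ∈ D, d ∉ p → ¬ LocallyApplicable W p d

/-- Extensions (as sets of models, i.e. up to logical equivalence) in Reiter semantics. -/
def ReiterExtensions {V : Type} (D : Set (Default V)) (W : Set (Clause V)) :
    Set (Set (Set V)) :=
  {E | ∃ p, ReiterSelected D W p ∧ E = ModOf W ∩ consSet p}

theorem selected_process_monotone {V : Type} (D : Set (Default V))
    (W' W : Set (Clause V)) (hD : D.Finite) (hW : W.Finite)
    (hsub : W' ⊆ W)
    (hent : ∀ E ∈ ReiterExtensions D W', E ⊆ ModOf W) :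
    (∀ p, ReiterSelected D W' p → ReiterSelected D W p) ∧
    ReiterExtensions D W' ⊆ ReiterExtensions D W := by
  have hmod : ModOf W ⊆ ModOf W' := fun M hM c hc => hM c (hsub hc)
  have key : ∀ p, ReiterSelected D W' p →
      ModOf W ∩ consSet p = ModOf W' ∩ consSet p := by
    intro p hp
    apply Set.Subset.antisymm
    · exact Set.inter_subset_inter_left _ hmod
    · intro M hM
      have hE : ModOf W' ∩ consSet p ⊆ ModOf W :=
        hent _ ⟨p, hp, rfl⟩
      exact ⟨hE hM, hM.2⟩
  have main : ∀ p, ReiterSelected D W' p → ReiterSelected D W p := by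
    intro p hp
    obtain ⟨⟨hnd, hmem, hproc⟩, hsucc, hmax⟩ := hp
    refine ⟨⟨hnd, hmem, ?_⟩, ?_, ?_⟩
    · intro i h M hM
      exact hproc i h ⟨hmod hM.1, hM.2⟩
    · intro d hd
      rw [key p ⟨⟨hnd, hmem, hproc⟩, hsucc, hmax⟩]
      exact hsucc d hd
    · intro d hd hdp hla
      refine hmax d hd hdp ?_
      rw [LocallyApplicable, ← key p ⟨⟨hnd, hmem, hproc⟩, hsucc, hmax⟩]
      exact hla
  refine ⟨main, ?_⟩
  rintro E ⟨p, hp, rfl⟩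
  exact ⟨p, main p hp, (key p hp).symm⟩
end

section
/- For W' ⊆ W, the three conditions W' ⊨_D W (every extension of ⟨D,W'⟩ entails W), W' ⊨^c_D W (∨Ext_D(W') ⊨ ∨Ext_D(W)), and W' ⊨^e_D W (Ext_D(W') ⊆ Ext_D(W)) are all equivalent. -/
lemma ModOf_anti {V : Type} {W' W : Set (Clause V)} (h : W' ⊆ W) :
    ModOf W ⊆ ModOf W' := fun M hM c hc => hM c (h hc)

lemma ext_subset_mod {V : Type} (D : Set (Default V)) (W : Set (Clause V)) :
    ⋃₀ ReiterExtensions D W ⊆ ModOf W := by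
  rintro M ⟨E, ⟨p, _, rfl⟩, hM⟩
  exact hM.1

lemma plain_to_e {V : Type} (D : Set (Default V)) (W' W : Set (Clause V))
    (hsub : W' ⊆ W) (hpl : ⋃₀ ReiterExtensions D W' ⊆ ModOf W) :
    ReiterExtensions D W' ⊆ ReiterExtensions D W := by
  rintro E ⟨p, hsel, rfl⟩
  have hmod : ModOf W ⊆ ModOf W' := ModOf_anti hsub
  have hE : ModOf W' ∩ consSet p ⊆ ModOf W := fun x hx =>
    hpl ⟨_, ⟨p, hsel, rfl⟩, hx⟩
  have hEq : ModOf W ∩ consSet p = ModOf W' ∩ consSet p := by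
    apply Set.Subset.antisymm
    · exact Set.inter_subset_inter_left _ hmod
    · exact fun x hx => ⟨hE hx, hx.2⟩
  refine ⟨p, ⟨⟨hsel.1.1, hsel.1.2.1, fun i hi => ?_⟩, ?_, ?_⟩, hEq.symm⟩
  · exact (Set.inter_subset_inter_left _ hmod).trans (hsel.1.2.2 i hi)
  · intro d hd
    rw [hEq]
    exact hsel.2.1 d hd
  · intro d hD hnp ⟨happ, hne⟩
    exact hsel.2.2 d hD hnp ⟨hEq ▸ happ, hEq ▸ hne⟩

/-- For W' ⊆ W, plain entailment, consequence-entailment and faithful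
entailment all coincide. -/
theorem entailments_coincide {V : Type}
    (D : Set (Default V)) (W' W : Set (Clause V)) (hsub : W' ⊆ W) :
    ((⋃₀ ReiterExtensions D W' ⊆ ModOf W) ↔
      (⋃₀ ReiterExtensions D W' ⊆ ⋃₀ ReiterExtensions D W)) ∧
    ((⋃₀ ReiterExtensions D W' ⊆ ModOf W) ↔
      ReiterExtensions D W' ⊆ ReiterExtensions D W) := by
  have he : (⋃₀ ReiterExtensions D W' ⊆ ModOf W) ↔
      ReiterExtensions D W' ⊆ ReiterExtensions D W := by
    constructor
    · exact plain_to_e D W' W hsub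
    · intro h
      exact (Set.sUnion_mono h).trans (ext_subset_mod D W)
  refine ⟨⟨fun h => Set.sUnion_mono (he.mp h), fun h => h.trans (ext_subset_mod D W)⟩, he⟩
end

section
/- There exist a set of defaults D and background theories W' ⊂ W such that W and W' mutually entail each other under default entailment (W' ⊨_D W and W ⊨_D W') but they are not consequence-equivalent (∨Ext_D(W') ≢ ∨Ext_D(W)). Concretely: D = {(:a∧¬b)/(a∧¬b), (a:b)/b}, W = {a}, W' = ∅; then ∨Ext_D(W') ≡ a∧¬b while ∨Ext_D(W) ≡ a. -/
/-- The default (:a∧¬b)/(a∧¬b); variables a = 0, b = 1 : Fin 2. -/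
def d1 : Default (Fin 2) :=
  ⟨Set.univ, {M | 0 ∈ M ∧ 1 ∉ M}, {M | 0 ∈ M ∧ 1 ∉ M}⟩
/-- The default (a:b)/b. -/
def d2 : Default (Fin 2) :=
  ⟨{M | 0 ∈ M}, {M | 1 ∈ M}, {M | 1 ∈ M}⟩
/-- The background theory W = {a}. -/
def Wa : Set (Clause (Fin 2)) := {⟨{0}, ∅⟩}

-- auxiliary lemmas
lemma d1_ne_d2 : d1 ≠ d2 := by
  intro h
  have : (∅ : Set (Fin 2)) ∈ d1.prec := by simp [d1]
  rw [h] at this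
  simp [d2] at this

lemma ModOf_empty : ModOf (∅ : Set (Clause (Fin 2))) = Set.univ := by
  simp [ModOf]

lemma ModOf_Wa : ModOf Wa = {M : Set (Fin 2) | 0 ∈ M} := by
  ext M
  simp [ModOf, Wa, Clause.sat]

lemma consSet_nil : consSet ([] : List (Default (Fin 2))) = Set.univ := by
  simp [consSet]

lemma mem_consSet_single (d : Default (Fin 2)) (M : Set (Fin 2)) :
    M ∈ consSet [d] ↔ M ∈ d.cons := by simp [consSet]

lemma classify (p : List (Default (Fin 2))) (hnd : p.Nodup)
    (hD : ∀ d ∈ p, d ∈ ({d1, d2} : Set (Default (Fin 2)))) :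
    p = [] ∨ p = [d1] ∨ p = [d2] ∨ p = [d1, d2] ∨ p = [d2, d1] := by
  match p with
  | [] => exact Or.inl rfl
  | [a] =>
    rcases hD a (by simp) with h | h
    · exact Or.inr (Or.inl (by rw [h]))
    · exact Or.inr (Or.inr (Or.inl (by rw [h])))
  | [a, b] =>
    have hab : a ≠ b := by
      simp [List.nodup_cons] at hnd; exact hnd
    rcases hD a (by simp) with ha | ha <;> rcases hD b (by simp) with hb | hb
    · exact absurd (ha.trans hb.symm) hab
    · exact Or.inr (Or.inr (Or.inr (Or.inl (by rw [ha, hb]))))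
    · exact Or.inr (Or.inr (Or.inr (Or.inr (by rw [ha, hb]))))
    · exact absurd (ha.trans hb.symm) hab
  | a :: b :: c :: r =>
    exfalso
    simp [List.nodup_cons] at hnd
    have hab : a ≠ b := hnd.1.1
    have hac : a ≠ c := hnd.1.2.1
    have hbc : b ≠ c := hnd.2.1.1
    rcases hD a (by simp) with ha | ha <;> rcases hD b (by simp) with hb | hb <;>
      rcases hD c (by simp) with hc | hc
    · exact hab (ha.trans hb.symm)
    · exact hab (ha.trans hb.symm)
    · exact hac (ha.trans hc.symm)
    · exact hbc (hb.trans hc.symm)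
    · exact hbc (hb.trans hc.symm)
    · exact hac (ha.trans hc.symm)
    · exact hab (ha.trans hb.symm)
    · exact hab (ha.trans hb.symm)

lemma sel_d1 (W : Set (Clause (Fin 2))) (hW : ({0} : Set (Fin 2)) ∈ ModOf W) :
    ReiterSelected {d1, d2} W [d1] := by
  refine ⟨⟨by simp, by simp, ?_⟩, ?_, ?_⟩
  · intro i h
    have hi : i = 0 := Nat.lt_one_iff.mp (by simpa using h)
    subst hi
    simp [d1]
  · intro d hd
    simp at hd
    subst hd
    exact ⟨{0}, ⟨hW, by simp [consSet, d1]⟩, by simp [d1]⟩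
  · intro d hd hnp
    simp only [Set.mem_insert_iff, Set.mem_singleton_iff] at hd
    rcases hd with h | h
    · exact absurd (by simp [h]) hnp
    · subst h
      rintro ⟨-, M, ⟨-, hc⟩, hj⟩
      have h1 : (1 : Fin 2) ∉ M := ((mem_consSet_single d1 M).mp hc).2
      exact h1 hj

lemma sel_d2 : ReiterSelected {d1, d2} Wa [d2] := by
  refine ⟨⟨by simp, by simp [d1_ne_d2], ?_⟩, ?_, ?_⟩
  · intro i h
    have hi : i = 0 := Nat.lt_one_iff.mp (by simpa using h)
    subst hi
    simp only [List.take_zero, consSet_nil, Set.inter_univ, ModOf_Wa, List.get]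
    intro M hM; exact hM
  · intro d hd
    simp at hd
    subst hd
    refine ⟨{0, 1}, ⟨⟨?_, ?_⟩, ?_⟩⟩
    · rw [ModOf_Wa]; simp
    · simp [consSet, d2]
    · simp [d2]
  · intro d hd hnp
    simp only [Set.mem_insert_iff, Set.mem_singleton_iff] at hd
    rcases hd with h | h
    · subst h
      rintro ⟨-, M, ⟨-, hc⟩, hj⟩
      have h1 : (1 : Fin 2) ∈ M := (mem_consSet_single d2 M).mp hc
      exact hj.2 h1
    · exact absurd (by simp [h]) hnp

lemma not_sel_nil (W : Set (Clause (Fin 2))) (hW : ({0} : Set (Fin 2)) ∈ ModOf W) :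
    ¬ ReiterSelected {d1, d2} W [] := by
  rintro ⟨-, -, hmax⟩
  refine hmax d1 (by simp) (by simp) ⟨?_, ⟨{0}, ⟨hW, by simp [consSet]⟩, ?_⟩⟩
  · intro M _; simp [d1]
  · simp [d1]

lemma not_succ_two (W : Set (Clause (Fin 2))) (p : List (Default (Fin 2)))
    (h1 : d1 ∈ p) (h2 : d2 ∈ p) : ¬ Successful W p := by
  intro hs
  rcases hs d2 h2 with ⟨M, ⟨⟨-, hc⟩, hj⟩⟩
  have hn1 : (1 : Fin 2) ∉ M := (hc d1 h1).2
  exact hn1 (hj : M ∈ d2.just)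

lemma unionExt_empty :
    ⋃₀ ReiterExtensions {d1, d2} (∅ : Set (Clause (Fin 2)))
      = {M : Set (Fin 2) | 0 ∈ M ∧ 1 ∉ M} := by
  have h01 : ({0} : Set (Fin 2)) ∈ ModOf (∅ : Set (Clause (Fin 2))) := by
    rw [ModOf_empty]; trivial
  ext M
  constructor
  · rintro ⟨E, ⟨p, hsel, rfl⟩, hME⟩
    rcases classify p hsel.1.1 hsel.1.2.1 with rfl | rfl | rfl | rfl | rfl
    · exact absurd hsel (not_sel_nil _ h01)
    · exact (mem_consSet_single d1 M).mp hME.2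
    · exfalso
      have hpre := hsel.1.2.2 0 (by simp)
      have : (∅ : Set (Fin 2)) ∈ d2.prec := by
        apply hpre
        refine ⟨by rw [ModOf_empty]; trivial, by simp [consSet]⟩
      simp [d2] at this
    · exact absurd hsel.2.1 (not_succ_two _ _ (by simp) (by simp))
    · exact absurd hsel.2.1 (not_succ_two _ _ (by simp) (by simp))
  · intro hM
    exact ⟨_, ⟨[d1], sel_d1 _ h01, rfl⟩,
      ⟨by rw [ModOf_empty]; trivial, (mem_consSet_single d1 M).mpr hM⟩⟩

lemma unionExt_Wa :
    ⋃₀ ReiterExtensions {d1, d2} Wa = {M : Set (Fin 2) | 0 ∈ M} := by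
  have h0Wa : ({0} : Set (Fin 2)) ∈ ModOf Wa := by rw [ModOf_Wa]; simp
  ext M
  constructor
  · rintro ⟨E, ⟨p, hsel, rfl⟩, hME⟩
    rcases classify p hsel.1.1 hsel.1.2.1 with rfl | rfl | rfl | rfl | rfl
    · exact absurd hsel (not_sel_nil _ h0Wa)
    · have := hME.1; rw [ModOf_Wa] at this; exact this
    · have := hME.1; rw [ModOf_Wa] at this; exact this
    · exact absurd hsel.2.1 (not_succ_two _ _ (by simp) (by simp))
    · exact absurd hsel.2.1 (not_succ_two _ _ (by simp) (by simp))
  · intro hM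
    by_cases h1 : (1 : Fin 2) ∈ M
    · exact ⟨_, ⟨[d2], sel_d2, rfl⟩,
        ⟨by rw [ModOf_Wa]; exact hM, (mem_consSet_single d2 M).mpr h1⟩⟩
    · exact ⟨_, ⟨[d1], sel_d1 _ h0Wa, rfl⟩,
        ⟨by rw [ModOf_Wa]; exact hM, (mem_consSet_single d1 M).mpr ⟨hM, h1⟩⟩⟩

/-- Mutual entailment without consequence-equivalence:
with W' = ∅ ⊂ W = {a}, every extension of ⟨D,W'⟩ entails W and vice versa,
∨Ext_D(W') ≡ a∧¬b, ∨Ext_D(W) ≡ a, and the two are not equivalent. -/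
theorem mutual_not_consequence :
    (∅ : Set (Clause (Fin 2))) ⊂ Wa ∧
    (⋃₀ ReiterExtensions {d1, d2} (∅ : Set (Clause (Fin 2))) ⊆ ModOf Wa) ∧
    (⋃₀ ReiterExtensions {d1, d2} Wa ⊆ ModOf (∅ : Set (Clause (Fin 2)))) ∧
    ⋃₀ ReiterExtensions {d1, d2} (∅ : Set (Clause (Fin 2)))
      = {M : Set (Fin 2) | 0 ∈ M ∧ 1 ∉ M} ∧
    ⋃₀ ReiterExtensions {d1, d2} Wa = {M : Set (Fin 2) | 0 ∈ M} ∧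
    ⋃₀ ReiterExtensions {d1, d2} (∅ : Set (Clause (Fin 2)))
      ≠ ⋃₀ ReiterExtensions {d1, d2} Wa := by
  refine ⟨?_, ?_, ?_, unionExt_empty, unionExt_Wa, ?_⟩
  · exact Set.empty_ssubset.mpr ⟨_, rfl⟩
  · rw [unionExt_empty, ModOf_Wa]
    intro M hM; exact hM.1
  · rw [ModOf_empty]; exact Set.subset_univ _
  · rw [unionExt_empty, unionExt_Wa]
    intro h
    have h01 : ({0, 1} : Set (Fin 2)) ∈ {M : Set (Fin 2) | 0 ∈ M} := by simp
    rw [← h] at h01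
    exact h01.2 (by simp)
end

section
/- Partial monotonicity of extensions: if E is an extension of both ⟨D,W'⟩ and ⟨D,W⟩ with W' ⊆ W, then E is an extension of ⟨D,W''⟩ for every W'' with W' ⊆ W'' ⊆ W. -/
/-- Partial monotonicity of extensions. -/
theorem extension_continue {V : Type} (D : Set (Default V))
    (W' W'' W : Set (Clause V)) (h1 : W' ⊆ W'') (h2 : W'' ⊆ W)
    (E : Set (Set V))
    (hE' : E ∈ ReiterExtensions D W') (hE : E ∈ ReiterExtensions D W) :
    E ∈ ReiterExtensions D W'' := by
  obtain ⟨p', ⟨hproc, hsucc, hmax⟩, hEeq'⟩ := hE'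
  obtain ⟨p, _, hEeq⟩ := hE
  have hmono : ∀ {A B : Set (Clause V)}, A ⊆ B → ModOf B ⊆ ModOf A := by
    intro A B hAB M hM c hc
    exact hM c (hAB hc)
  have hkey : ModOf W'' ∩ consSet p' = E := by
    apply Set.Subset.antisymm
    · intro M hM
      rw [hEeq']
      exact ⟨hmono h1 hM.1, hM.2⟩
    · intro M hM
      have hW : M ∈ ModOf W ∩ consSet p := hEeq ▸ hM
      have hW' : M ∈ ModOf W' ∩ consSet p' := hEeq' ▸ hM
      exact ⟨hmono h2 hW.1, hW'.2⟩
  have heq2 : ModOf W'' ∩ consSet p' = ModOf W' ∩ consSet p' :=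
    hkey.trans hEeq'
  refine ⟨p', ⟨⟨hproc.1, hproc.2.1, ?_⟩, ?_, ?_⟩, hkey.symm⟩
  · intro i h M hM
    exact hproc.2.2 i h ⟨hmono h1 hM.1, hM.2⟩
  · intro d hd
    obtain ⟨M, hM⟩ := hsucc d hd
    refine ⟨M, ?_⟩
    have : M ∈ ModOf W'' ∩ consSet p' := heq2 ▸ (⟨hM.1.1, hM.1.2⟩ : M ∈ ModOf W' ∩ consSet p')
    exact ⟨this, hM.2⟩
  · intro d hdD hdp ⟨hsub, hne⟩
    refine hmax d hdD hdp ⟨?_, ?_⟩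
    · rw [← heq2]; exact hsub
    · obtain ⟨M, hM⟩ := hne
      exact ⟨M, heq2 ▸ hM.1, hM.2⟩
end

section
/- If Π is a selected process of both ⟨D,W'⟩ and ⟨D,W⟩ generating the same extension in both, then Π is a selected process of every ⟨D,W''⟩ with W' ⊆ W'' ⊆ W and generates the same extension there. -/
theorem process_median {V : Type} (D : Set (Default V))
    (W' W'' W : Set (Clause V)) (h1 : W' ⊆ W'') (h2 : W'' ⊆ W)
    (p : List (Default V))
    (hp' : ReiterSelected D W' p) (hp : ReiterSelected D W p)
    (hsame : ModOf W' ∩ consSet p = ModOf W ∩ consSet p) :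
    ReiterSelected D W'' p ∧
    ModOf W'' ∩ consSet p = ModOf W ∩ consSet p := by
  have anti : ∀ (A B : Set (Clause V)), A ⊆ B → ModOf B ⊆ ModOf A := by
    intro A B hAB M hM c hc
    exact hM c (hAB hc)
  have m1 : ModOf W'' ⊆ ModOf W' := anti _ _ h1
  have m2 : ModOf W ⊆ ModOf W'' := anti _ _ h2
  have key : ModOf W'' ∩ consSet p = ModOf W ∩ consSet p := by
    apply Set.Subset.antisymm
    · intro M hM
      rw [← hsame]
      exact ⟨m1 hM.1, hM.2⟩
    · intro M hM
      exact ⟨m2 hM.1, hM.2⟩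
  obtain ⟨⟨hnd, hD, hstep⟩, hsucc, hmax⟩ := hp'
  obtain ⟨_, hsuccW, hmaxW⟩ := hp
  refine ⟨⟨⟨hnd, hD, ?_⟩, ?_, ?_⟩, key⟩
  · intro i h M hM
    exact hstep i h ⟨m1 hM.1, hM.2⟩
  · intro d hd
    have h := hsuccW d hd
    rwa [← key] at h
  · intro d hd hdp hla
    exact hmaxW d hd hdp ⟨key ▸ hla.1, key ▸ hla.2⟩
end
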